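/- arXiv:1101.0323 — 3 statements merged into one kernel-verified Lean document; each statement's English description precedes it below -/
import Mathlib

section
/- In the number field model, for every κ ∈ K ∪ {∞}, the subgroup T^κ of X² is a closed subgroup which is isomorphic as a topological group to the d-dimensional torus 𝕋^d = ℝ^d/ℤ^d; equivalently, the quotient (X̂×X̂)/(X̂²)^κ is isomorphic to ℤ^d. -/
noncomputable section

/-- The ambient space `ℝ^{r₁} ⊕ ℂ^{r₂}`. -/
abbrev Amb (r₁ r₂ : ℕ) : Type := (Fin r₁ → ℝ) × (Fin r₂ → ℂ)

/-- The multiplicative action of `θ ∈ K` on the ambient space, acting on the `i`-th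
coordinate by multiplication by `σ_i(θ)`. -/
def mulK {K : Type} [Field K] {r₁ r₂ : ℕ} (σR : Fin r₁ → (K →+* ℝ))
    (σC : Fin r₂ → (K →+* ℂ)) (θ : K) (x : Amb r₁ r₂) : Amb r₁ r₂ :=
  (fun i => σR i θ * x.1 i, fun j => σC j θ * x.2 j)

/-- The embedding `σ : K → ℝ^{r₁} ⊕ ℂ^{r₂}`. -/
def embK {K : Type} [Field K] {r₁ r₂ : ℕ} (σR : Fin r₁ → (K →+* ℝ))
    (σC : Fin r₂ → (K →+* ℂ)) (θ : K) : Amb r₁ r₂ :=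
  (fun i => σR i θ, fun j => σC j θ)

/-- The image in `K` of a unit of the ring of integers. -/
def unitToK {K : Type} [Field K] [NumberField K] (u : (NumberField.RingOfIntegers K)ˣ) : K :=
  algebraMap (NumberField.RingOfIntegers K) K (u : NumberField.RingOfIntegers K)

/-- The pairing `⟨ξ,x⟩ = Σ ξᵢxᵢ + Σ 2 Re(ξⱼxⱼ)` on the ambient space. -/
def pairAmb {r₁ r₂ : ℕ} (ξ x : Amb r₁ r₂) : ℝ :=
  (∑ i, ξ.1 i * x.1 i) + ∑ j, 2 * (ξ.2 j * x.2 j).re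

/-- `σ(𝒪_K)`, as an additive subgroup of the ambient space. -/
def ringLat {K : Type} [Field K] [NumberField K] {r₁ r₂ : ℕ} (σR : Fin r₁ → (K →+* ℝ))
    (σC : Fin r₂ → (K →+* ℂ)) : AddSubgroup (Amb r₁ r₂) :=
  AddSubgroup.closure
    (Set.range fun a : NumberField.RingOfIntegers K =>
      embK σR σC (algebraMap (NumberField.RingOfIntegers K) K a))

/-- The dual lattice `X̂` of `X = (ℝ^{r₁}⊕ℂ^{r₂})/Γ`. -/
def hatX {r₁ r₂ : ℕ} (Γ : AddSubgroup (Amb r₁ r₂)) : Set (Amb r₁ r₂) :=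
  {ξ | ∀ γ ∈ Γ, ∃ m : ℤ, pairAmb ξ γ = (m : ℝ)}

/-- `(X̂²)^κ` for `κ ∈ K ∪ {∞}`, where `∞` is encoded as `none`. -/
def hatSq {K : Type} [Field K] {r₁ r₂ : ℕ} (σR : Fin r₁ → (K →+* ℝ))
    (σC : Fin r₂ → (K →+* ℂ)) (Γ : AddSubgroup (Amb r₁ r₂)) :
    Option K → Set (Amb r₁ r₂ × Amb r₁ r₂)
  | some κ => {ξ | ξ.1 ∈ hatX Γ ∧ ξ.2 ∈ hatX Γ ∧ ξ.1 + mulK σR σC κ ξ.2 = 0}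
  | none => {ξ | ξ.1 ∈ hatX Γ ∧ ξ.2 = 0}

/-- The subtorus `T^κ ⊆ X²`, defined as the annihilator of `(X̂²)^κ`. -/
def Tk {K : Type} [Field K] {r₁ r₂ : ℕ} (σR : Fin r₁ → (K →+* ℝ))
    (σC : Fin r₂ → (K →+* ℂ)) (Γ : AddSubgroup (Amb r₁ r₂)) (κ : Option K) :
    Set ((Amb r₁ r₂ × Amb r₁ r₂) ⧸ Γ.prod Γ) :=
  {x | ∃ x' : Amb r₁ r₂ × Amb r₁ r₂,
    (QuotientAddGroup.mk x' : (Amb r₁ r₂ × Amb r₁ r₂) ⧸ Γ.prod Γ) = x ∧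
    ∀ ξ ∈ hatSq σR σC Γ κ, ∃ m : ℤ, pairAmb ξ.1 x'.1 + pairAmb ξ.2 x'.2 = (m : ℝ)}

/-- The diagonal multiplicative action of `θ ∈ K` on `(ℝ^{r₁}⊕ℂ^{r₂})²`. -/
def mulKsq {K : Type} [Field K] {r₁ r₂ : ℕ} (σR : Fin r₁ → (K →+* ℝ))
    (σC : Fin r₂ → (K →+* ℂ)) (θ : K) (x : Amb r₁ r₂ × Amb r₁ r₂) :
    Amb r₁ r₂ × Amb r₁ r₂ :=
  (mulK σR σC θ x.1, mulK σR σC θ x.2)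

/-- The complex-valued `i`-th embedding, for `i` in the index set `I = Fin r₁ ⊕ Fin r₂`. -/
def embC {K : Type} [Field K] {r₁ r₂ : ℕ} (σR : Fin r₁ → (K →+* ℝ))
    (σC : Fin r₂ → (K →+* ℂ)) : Fin r₁ ⊕ Fin r₂ → K → ℂ
  | Sum.inl i => fun θ => (σR i θ : ℂ)
  | Sum.inr j => fun θ => σC j θ

/-- `λ_i(n) = log |σ_i(ζ^n)|`. -/
def lam {K : Type} [Field K] [NumberField K] {r r₁ r₂ : ℕ} (σR : Fin r₁ → (K →+* ℝ))
    (σC : Fin r₂ → (K →+* ℂ)) (ζ : (Fin r → ℤ) → (NumberField.RingOfIntegers K)ˣ)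
    (i : Fin r₁ ⊕ Fin r₂) (n : Fin r → ℤ) : ℝ :=
  Real.log ‖embC σR σC i (unitToK (ζ n))‖

/-- The subspace `V^κ` of `(ℝ^{r₁}⊕ℂ^{r₂})²`, for `κ ∈ K ∪ {∞}`. -/
def Vk {K : Type} [Field K] {r₁ r₂ : ℕ} (σR : Fin r₁ → (K →+* ℝ))
    (σC : Fin r₂ → (K →+* ℂ)) : Option K → Set (Amb r₁ r₂ × Amb r₁ r₂)
  | some κ => {v | v.2 = mulK σR σC κ v.1}
  | none => {v | v.1 = 0}

/-- The coordinate subspace `V_i` of `ℝ^{r₁}⊕ℂ^{r₂}`. -/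
def Vslice (r₁ r₂ : ℕ) : Fin r₁ ⊕ Fin r₂ → Set (Amb r₁ r₂)
  | Sum.inl i => {x | (∀ i', i' ≠ i → x.1 i' = 0) ∧ x.2 = 0}
  | Sum.inr j => {x | x.1 = 0 ∧ ∀ j', j' ≠ j → x.2 j' = 0}

/-- `V_i^□ = V_i ⊕ V_i ⊆ (ℝ^{r₁}⊕ℂ^{r₂})²`. -/
def VsliceSq (r₁ r₂ : ℕ) (i : Fin r₁ ⊕ Fin r₂) : Set (Amb r₁ r₂ × Amb r₁ r₂) :=
  {v | v.1 ∈ Vslice r₁ r₂ i ∧ v.2 ∈ Vslice r₁ r₂ i}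

/-- The image of a subset of `X²` under `ζ_Δ^n`. -/
def setAct {K : Type} [Field K] [NumberField K] {r r₁ r₂ : ℕ} (σR : Fin r₁ → (K →+* ℝ))
    (σC : Fin r₂ → (K →+* ℂ)) (Γ : AddSubgroup (Amb r₁ r₂))
    (ζ : (Fin r → ℤ) → (NumberField.RingOfIntegers K)ˣ) (n : Fin r → ℤ)
    (S : Set ((Amb r₁ r₂ × Amb r₁ r₂) ⧸ Γ.prod Γ)) :
    Set ((Amb r₁ r₂ × Amb r₁ r₂) ⧸ Γ.prod Γ) :=
  {y | ∃ x' : Amb r₁ r₂ × Amb r₁ r₂,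
    (QuotientAddGroup.mk x' : (Amb r₁ r₂ × Amb r₁ r₂) ⧸ Γ.prod Γ) ∈ S ∧
    y = QuotientAddGroup.mk (mulKsq σR σC (unitToK (ζ n)) x')}

/-- A `d`-dimensional homogeneous `ζ_Δ`-invariant subset
`L = {ζ_Δ^n·z' : n ∈ ℤ^r, z' ∈ z + T^κ}`. -/
def homogSet {K : Type} [Field K] [NumberField K] {r r₁ r₂ : ℕ} (σR : Fin r₁ → (K →+* ℝ))
    (σC : Fin r₂ → (K →+* ℂ)) (Γ : AddSubgroup (Amb r₁ r₂))
    (ζ : (Fin r → ℤ) → (NumberField.RingOfIntegers K)ˣ)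
    (z : (Amb r₁ r₂ × Amb r₁ r₂) ⧸ Γ.prod Γ) (κ : Option K) :
    Set ((Amb r₁ r₂ × Amb r₁ r₂) ⧸ Γ.prod Γ) :=
  {y | ∃ (n : Fin r → ℤ) (x' : Amb r₁ r₂ × Amb r₁ r₂),
    (QuotientAddGroup.mk x' : (Amb r₁ r₂ × Amb r₁ r₂) ⧸ Γ.prod Γ) ∈ (z + ·) '' Tk σR σC Γ κ ∧
    y = QuotientAddGroup.mk (mulKsq σR σC (unitToK (ζ n)) x')}


namespace TkAux

open Module Topology

variable {r₁ r₂ : ℕ}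

def pairB (r₁ r₂ : ℕ) : LinearMap.BilinForm ℝ (Amb r₁ r₂) :=
  LinearMap.mk₂ ℝ pairAmb
    (fun a b x => by
      simp only [pairAmb, Prod.fst_add, Prod.snd_add, Pi.add_apply, add_mul, Complex.add_re,
        mul_add, Finset.sum_add_distrib]
      ring)
    (fun c a x => by
      simp only [pairAmb, Prod.smul_fst, Prod.smul_snd, Pi.smul_apply, smul_eq_mul,
        Complex.real_smul, mul_assoc, Complex.re_ofReal_mul, mul_left_comm,
        Finset.mul_sum, mul_add])
    (fun a x y => by
      simp only [pairAmb, Prod.fst_add, Prod.snd_add, Pi.add_apply, mul_add, Complex.add_re,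
        Finset.sum_add_distrib]
      ring)
    (fun c a x => by
      simp only [pairAmb, Prod.smul_fst, Prod.smul_snd, Pi.smul_apply, smul_eq_mul,
        Complex.real_smul, Complex.re_ofReal_mul, mul_left_comm,
        Finset.mul_sum, mul_add])

@[simp] lemma pairB_apply (ξ x : Amb r₁ r₂) : pairB r₁ r₂ ξ x = pairAmb ξ x := rfl

lemma pairB_symm : (pairB r₁ r₂).IsSymm := by
  refine ⟨?_⟩
  intro x y
  simp only [RingHom.id_apply, pairB_apply, pairAmb]
  congr 1
  · exact Finset.sum_congr rfl fun i _ => mul_comm _ _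
  · exact Finset.sum_congr rfl fun j _ => by rw [mul_comm (x.2 j) (y.2 j)]

lemma pairB_nondeg : (pairB r₁ r₂).Nondegenerate := by
  refine (fun hL => ⟨hL, fun y hy => hL y fun x => by rw [pairB_symm.eq]; exact hy x⟩) ?_
  intro ξ h
  have h1 : ∀ i, ξ.1 i = 0 := by
    intro i
    have := h (Pi.single i 1, 0)
    simp only [pairB_apply, pairAmb, Prod.snd] at this
    rw [Finset.sum_eq_single i (fun b _ hb => by rw [Pi.single_eq_of_ne hb, mul_zero])
      (fun hi => absurd (Finset.mem_univ i) hi)] at this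
    simpa using this
  have h2 : ∀ j, ξ.2 j = 0 := by
    intro j
    have hre := h (0, Pi.single j 1)
    have him := h (0, Pi.single j Complex.I)
    simp only [pairB_apply, pairAmb] at hre him
    rw [Finset.sum_eq_single j (fun b _ hb => by rw [Pi.single_eq_of_ne hb, mul_zero]; simp)
      (fun hj => absurd (Finset.mem_univ j) hj)] at hre him
    simp only [Pi.single_eq_same, mul_one] at hre him
    have hre' : (ξ.2 j).re = 0 := by
      have : (∑ i : Fin r₁, ξ.1 i * (0:Fin r₁ → ℝ) i) = 0 := by simp
      rw [this, zero_add] at hre; linarith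
    have him' : (ξ.2 j).im = 0 := by
      have : (∑ i : Fin r₁, ξ.1 i * (0:Fin r₁ → ℝ) i) = 0 := by simp
      rw [this, zero_add, Complex.mul_I_re] at him; linarith
    exact Complex.ext hre' him'
  exact Prod.ext (funext h1) (funext h2)


theorem span_top_of_compactQuotient {E : Type} [NormedAddCommGroup E] [NormedSpace ℝ E]
    [FiniteDimensional ℝ E] (Γ : AddSubgroup E) (hc : CompactSpace (E ⧸ Γ)) :
    Submodule.span ℝ (Γ : Set E) = ⊤ := by
  by_contra hne
  obtain ⟨f, hf0, hmap⟩ := (Submodule.span ℝ (Γ : Set E)).exists_dual_map_eq_bot_of_lt_top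
    (lt_top_iff_ne_top.2 hne) inferInstance
  have hΓ0 : ∀ γ ∈ Γ, f γ = 0 := by
    intro γ hγ
    have : f γ ∈ Submodule.map f (Submodule.span ℝ (Γ : Set E)) :=
      ⟨γ, Submodule.subset_span hγ, rfl⟩
    rw [hmap] at this
    simpa using this
  let g : E ⧸ Γ →+ ℝ := QuotientAddGroup.lift Γ f.toAddMonoidHom hΓ0
  have hgc : Continuous g := by
    have : Continuous (⇑g ∘ QuotientAddGroup.mk) := f.continuous_of_finiteDimensional
    exact ((QuotientAddGroup.isQuotientMap_mk Γ).continuous_iff).mpr this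
  have hcomp : IsCompact (Set.range g) := isCompact_range hgc
  obtain ⟨x, hx⟩ : ∃ x : E, f x ≠ 0 := by
    by_contra h
    push_neg at h
    exact hf0 (by ext y; simp [h y])
  have hrange : Set.range g = Set.univ := by
    apply Set.eq_univ_of_forall
    intro r
    exact ⟨QuotientAddGroup.mk ((r / f x) • x), by show f ((r / f x) • x) = r; rw [map_smul, smul_eq_mul, div_mul_cancel₀ r hx]⟩
  rw [hrange] at hcomp
  exact NoncompactSpace.noncompact_univ hcomp

theorem nsmul_relindex_mem {G : Type} [AddCommGroup G] (H K : AddSubgroup G)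
    {x : G} (hx : x ∈ K) : H.relIndex K • x ∈ H := by
  rcases eq_or_ne (H.relIndex K) 0 with h | h
  · simpa [h] using H.zero_mem
  haveI : Finite (↥K ⧸ H.addSubgroupOf K) := Nat.finite_of_card_ne_zero h
  have hq : (QuotientAddGroup.mk (H.relIndex K • (⟨x, hx⟩ : K)) :
      ↥K ⧸ H.addSubgroupOf K) = 0 := by
    rw [QuotientAddGroup.mk_nsmul]
    exact card_nsmul_eq_zero'
  have := (QuotientAddGroup.eq_zero_iff _).mp hq
  rw [AddSubgroup.mem_addSubgroupOf] at this
  simpa using this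

theorem discrete_of_nsmul_le {E : Type} [NormedAddCommGroup E] [NormedSpace ℝ E]
    (Γ : AddSubgroup E) [DiscreteTopology Γ] (S : Set E) (n : ℕ) (hn : n ≠ 0)
    (h : ∀ x ∈ S, n • x ∈ Γ) : DiscreteTopology S := by
  let f : S → Γ := fun x => ⟨n • (x : E), h x x.2⟩
  have hfc : Continuous f := Continuous.subtype_mk (continuous_subtype_val.nsmul n) _
  have hfi : Function.Injective f := by
    intro a b hab
    have : (n • (a : E)) = n • (b : E) := congrArg Subtype.val hab
    rw [← Nat.cast_smul_eq_nsmul ℝ, ← Nat.cast_smul_eq_nsmul ℝ] at this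
    have := smul_right_injective E (by exact_mod_cast hn : (n : ℝ) ≠ 0) this
    exact Subtype.ext this
  have : ∀ x : S, IsOpen {x} := by
    intro x
    have : {x} = f ⁻¹' {f x} := by
      ext y; simp only [Set.mem_singleton_iff, Set.mem_preimage]
      exact ⟨fun h' => by rw [h'], fun h' => hfi h'⟩
    rw [this]
    exact (isOpen_discrete _).preimage hfc
  exact ⟨eq_bot_of_singletons_open this⟩

theorem bidual_eq {E : Type} [NormedAddCommGroup E] [NormedSpace ℝ E] [FiniteDimensional ℝ E]
    (B : LinearMap.BilinForm ℝ E) (hB : B.Nondegenerate) (hBs : B.IsSymm)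
    (L : Submodule ℤ E) [DiscreteTopology L] [IsZLattice ℝ L] :
    B.dualSubmodule (B.dualSubmodule L) = L := by
  haveI : Module.Finite ℤ L := ZLattice.module_finite ℝ L
  haveI : Module.Free ℤ L := ZLattice.module_free ℝ L
  let b := Module.Free.chooseBasis ℤ L
  rw [← Basis.ofZLatticeBasis_span ℝ L b]
  exact LinearMap.BilinForm.dualSubmodule_dualSubmodule_of_basis B hB hBs _

open Module Topology

variable {K : Type} [Field K] {r₁ r₂ : ℕ} (σR : Fin r₁ → (K →+* ℝ)) (σC : Fin r₂ → (K →+* ℂ))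
variable {K : Type} [Field K] {r₁ r₂ : ℕ} (σR : Fin r₁ → (K →+* ℝ)) (σC : Fin r₂ → (K →+* ℂ))

/-- `mulK` as an `ℝ`-linear map. -/
def mulKL (θ : K) : Amb r₁ r₂ →ₗ[ℝ] Amb r₁ r₂ where
  toFun := mulK σR σC θ
  map_add' x y := by
    ext <;> simp [mulK, mul_add]
  map_smul' c x := by
    refine Prod.ext ?_ ?_
    · ext i; simp [mulK, mul_left_comm]
    · ext j
      simp only [mulK, Prod.smul_snd, Pi.smul_apply, Complex.real_smul, RingHom.id_apply]
      ring

@[simp] lemma mulKL_apply (θ : K) (x : Amb r₁ r₂) : mulKL σR σC θ x = mulK σR σC θ x := rfl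

lemma mulK_add_left (θ θ' : K) (x : Amb r₁ r₂) :
    mulK σR σC (θ + θ') x = mulK σR σC θ x + mulK σR σC θ' x := by
  ext <;> simp [mulK, add_mul]

lemma mulK_embK (θ θ' : K) : mulK σR σC θ (embK σR σC θ') = embK σR σC (θ * θ') := by
  ext <;> simp [mulK, embK]

lemma mulK_zsmul_left (m : ℤ) (θ : K) (x : Amb r₁ r₂) :
    mulK σR σC (m • θ) x = m • mulK σR σC θ x := by
  let h : K →+ Amb r₁ r₂ := AddMonoidHom.mk' (fun θ => mulK σR σC θ x) (fun a b => mulK_add_left σR σC a b x)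
  exact map_zsmul h m θ

lemma mulK_nsmul (θ : K) (n : ℕ) (x : Amb r₁ r₂) :
    mulK σR σC θ (n • x) = n • mulK σR σC θ x :=
  map_nsmul (mulKL σR σC θ (r₁ := r₁) (r₂ := r₂)).toAddMonoidHom n x

lemma pair_mulK (θ : K) (ξ x : Amb r₁ r₂) :
    pairAmb (mulK σR σC θ ξ) x = pairAmb ξ (mulK σR σC θ x) := by
  simp only [pairAmb, mulK]
  congr 1
  · exact Finset.sum_congr rfl fun i _ => by ring
  · exact Finset.sum_congr rfl fun j _ => by rw [show ξ.2 j * (σC j θ * x.2 j) = σC j θ * ξ.2 j * x.2 j by ring]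

variable [NumberField K]

lemma ringLat_mulK_mem (a : NumberField.RingOfIntegers K) {x : Amb r₁ r₂}
    (hx : x ∈ ringLat σR σC) :
    mulK σR σC (algebraMap (NumberField.RingOfIntegers K) K a) x ∈ ringLat σR σC := by
  induction hx using AddSubgroup.closure_induction with
  | mem y hy =>
    obtain ⟨a', rfl⟩ := hy
    rw [mulK_embK, ← map_mul]
    exact AddSubgroup.subset_closure ⟨a * a', rfl⟩
  | zero => rw [show mulK σR σC _ (0 : Amb r₁ r₂) = 0 from
      (mulKL σR σC _).map_zero]; exact (ringLat σR σC).zero_mem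
  | add y z _ _ hy hz => rw [show mulK σR σC _ (y + z) = _ + _ from
      (mulKL σR σC _).map_add y z]; exact (ringLat σR σC).add_mem hy hz
  | neg y _ hy => rw [show mulK σR σC _ (-y) = -(mulK σR σC _ y) from
      (mulKL σR σC _).map_neg y]; exact (ringLat σR σC).neg_mem hy

/-- integer denominator for κ acting on the ring lattice -/
lemma exists_nsmul_mulK_ringLat (κ : K) :
    ∃ N : ℕ, N ≠ 0 ∧ ∀ x ∈ ringLat σR σC, N • mulK σR σC κ x ∈ ringLat σR σC := by
  haveI : Algebra.IsAlgebraic ℚ K := Algebra.IsAlgebraic.of_finite ℚ K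
  have halg : IsAlgebraic ℤ κ :=
    (IsFractionRing.isAlgebraic_iff ℤ ℚ K).mpr (Algebra.IsAlgebraic.isAlgebraic κ)
  obtain ⟨y, hy, hint⟩ := halg.exists_integral_multiple
  refine ⟨y.natAbs, by simpa using hy, ?_⟩
  intro x hx
  have key : y • mulK σR σC κ x ∈ ringLat σR σC := by
    rw [← mulK_zsmul_left]
    have : y • κ = algebraMap (NumberField.RingOfIntegers K) K ⟨(y : K) * κ, by
        rw [show ((y : ℤ) : K) * κ = y • κ by simp [zsmul_eq_mul]]
        exact hint⟩ := by
      simp [zsmul_eq_mul]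
    rw [this]
    exact ringLat_mulK_mem σR σC _ hx
  rcases Int.natAbs_eq y with h | h
  · rw [← natCast_zsmul, ← h]; exact key
  · rw [← natCast_zsmul, show ((y.natAbs : ℤ)) = -y by omega, neg_zsmul]
    exact (ringLat σR σC).neg_mem key

/-- main commensurability consequence: an integer n with n•κΓ ⊆ Γ. -/
lemma exists_nsmul_mulK (Γ : AddSubgroup (Amb r₁ r₂))
    (h₁ : Γ.relIndex (ringLat σR σC) ≠ 0) (h₂ : (ringLat σR σC).relIndex Γ ≠ 0) (κ : K) :
    ∃ n : ℕ, n ≠ 0 ∧ ∀ γ ∈ Γ, n • mulK σR σC κ γ ∈ Γ := by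
  obtain ⟨N, hN, hNmul⟩ := exists_nsmul_mulK_ringLat σR σC κ
  set m₁ := Γ.relIndex (ringLat σR σC) with hm₁
  set m₂ := (ringLat σR σC).relIndex Γ with hm₂
  refine ⟨m₁ * N * m₂, by positivity, ?_⟩
  intro γ hγ
  have s1 : m₂ • γ ∈ ringLat σR σC := nsmul_relindex_mem _ Γ hγ
  have s2 : N • mulK σR σC κ (m₂ • γ) ∈ ringLat σR σC := hNmul _ s1
  have s3 : m₁ • (N • mulK σR σC κ (m₂ • γ)) ∈ Γ := nsmul_relindex_mem Γ _ s2
  rw [mulK_nsmul] at s3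
  rw [show (m₁ * N * m₂) • mulK σR σC κ γ = m₁ • N • m₂ • mulK σR σC κ γ by
    rw [smul_smul, smul_smul, mul_assoc]]
  exact s3


theorem torus_exists {E F : Type} [NormedAddCommGroup E] [NormedSpace ℝ E]
    [FiniteDimensional ℝ E] [NormedAddCommGroup F] [NormedSpace ℝ F]
    (d : ℕ) (hd : finrank ℝ E = d)
    (ψ : E →ₗ[ℝ] F) (N : AddSubgroup F) (hNc : IsClosed (N : Set F))
    (L : AddSubgroup E) (hL : ∀ x : E, ψ x ∈ N ↔ x ∈ L)
    (hLd : DiscreteTopology L) (hLspan : Submodule.span ℝ (L : Set E) = ⊤) :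
    ∃ φ : (Fin d → AddCircle (1 : ℝ)) →+ F ⧸ N,
      IsClosedEmbedding φ ∧
        Set.range φ = Set.range (fun x : E => (QuotientAddGroup.mk (ψ x) : F ⧸ N)) := by
  classical
  haveI : Fact ((0:ℝ) < 1) := ⟨one_pos⟩
  haveI : IsClosed (N : Set F) := hNc
  haveI : T2Space (F ⧸ N) := inferInstance
  -- the lattice as a ℤ-submodule
  set Lsub : Submodule ℤ E := AddSubgroup.toIntSubmodule L with hLsub
  haveI : DiscreteTopology Lsub := hLd
  haveI : IsZLattice ℝ Lsub := ⟨by rw [hLsub, AddSubgroup.coe_toIntSubmodule]; exact hLspan⟩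
  haveI : Module.Finite ℤ Lsub := ZLattice.module_finite ℝ Lsub
  haveI : Module.Free ℤ Lsub := ZLattice.module_free ℝ Lsub
  have hcard : Fintype.card (Module.Free.ChooseBasisIndex ℤ ↥Lsub) = d := by
    rw [← Module.finrank_eq_card_chooseBasisIndex, ZLattice.rank ℝ Lsub, hd]
  let e := Fintype.equivFinOfCardEq hcard
  let b : Basis (Fin d) ℤ Lsub := (Module.Free.chooseBasis ℤ Lsub).reindex e
  let bR : Basis (Fin d) ℝ E := Basis.ofZLatticeBasis ℝ Lsub b
  have hbR_span : Submodule.span ℤ (Set.range ⇑bR) = Lsub := Basis.ofZLatticeBasis_span ℝ Lsub b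
  have hbR_memL : ∀ i, bR i ∈ L := by
    intro i
    have : bR i ∈ Lsub := by
      rw [← hbR_span]; exact Submodule.subset_span (Set.mem_range_self i)
    exact this
  -- the coordinate homomorphisms
  let g : Fin d → (ℝ →+ F ⧸ N) := fun i =>
    AddMonoidHom.mk' (fun t => QuotientAddGroup.mk (ψ (t • bR i)))
      (fun a c => by
        show (QuotientAddGroup.mk (ψ ((a + c) • bR i)) : F ⧸ N) = _
        rw [add_smul, map_add]
        exact map_add (QuotientAddGroup.mk' N) _ _)
  have hg0 : ∀ i, ∀ t ∈ AddSubgroup.zmultiples (1 : ℝ), g i t = 0 := by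
    intro i t ht
    obtain ⟨k, rfl⟩ := AddSubgroup.mem_zmultiples_iff.mp ht
    show (QuotientAddGroup.mk (ψ ((k • (1:ℝ)) • bR i)) : F ⧸ N) = 0
    rw [QuotientAddGroup.eq_zero_iff]
    have : (k • (1:ℝ)) • bR i = k • bR i := by
      rw [zsmul_eq_mul, mul_one, Int.cast_smul_eq_zsmul]
    rw [this, map_zsmul]
    exact zsmul_mem ((hL (bR i)).mpr (hbR_memL i)) k
  let G : Fin d → (AddCircle (1:ℝ) →+ F ⧸ N) := fun i =>
    QuotientAddGroup.lift (AddSubgroup.zmultiples (1:ℝ)) (g i) (hg0 i)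
  let φ : (Fin d → AddCircle (1 : ℝ)) →+ F ⧸ N :=
    ∑ i, (G i).comp (Pi.evalAddMonoidHom (fun _ => AddCircle (1:ℝ)) i)
  have hφ_apply : ∀ u : Fin d → AddCircle (1:ℝ), φ u = ∑ i, G i (u i) := by
    intro u
    simp [φ, AddMonoidHom.finset_sum_apply]
  have key : ∀ t : Fin d → ℝ,
      φ (fun i => (QuotientAddGroup.mk (t i) : AddCircle (1:ℝ)))
        = QuotientAddGroup.mk (ψ (∑ i, t i • bR i)) := by
    intro t
    rw [hφ_apply]
    have : ∀ i, G i (QuotientAddGroup.mk (t i)) = QuotientAddGroup.mk (ψ (t i • bR i)) :=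
      fun i => rfl
    simp_rw [this]
    rw [map_sum ψ]
    exact (map_sum (QuotientAddGroup.mk' N) _ _).symm
  have hker : ∀ t : Fin d → ℝ,
      ((QuotientAddGroup.mk (ψ (∑ i, t i • bR i)) : F ⧸ N) = 0 ↔ ∀ i, ∃ m : ℤ, (m : ℝ) = t i) := by
    intro t
    rw [QuotientAddGroup.eq_zero_iff, hL]
    have hmem : (∑ i, t i • bR i) ∈ L ↔ (∑ i, t i • bR i) ∈ Lsub := Iff.rfl
    rw [hmem, ← hbR_span, Basis.mem_span_iff_repr_mem]
    simp_rw [Basis.repr_sum_self]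
    constructor
    · intro h i; obtain ⟨m, hm⟩ := h i; exact ⟨m, hm⟩
    · intro h i; obtain ⟨m, hm⟩ := h i; exact ⟨m, hm⟩
  -- representatives
  have hrep : ∀ u : Fin d → AddCircle (1:ℝ), ∃ t : Fin d → ℝ,
      (fun i => (QuotientAddGroup.mk (t i) : AddCircle (1:ℝ))) = u := by
    intro u
    choose t ht using fun i => QuotientAddGroup.mk_surjective (u i)
    exact ⟨t, funext ht⟩
  -- injectivity
  have hinj : Function.Injective φ := by
    rw [injective_iff_map_eq_zero]
    intro u hu
    obtain ⟨t, rfl⟩ := hrep u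
    rw [key] at hu
    have := (hker t).mp hu
    funext i
    obtain ⟨m, hm⟩ := this i
    rw [← hm]
    exact (AddCircle.coe_eq_zero_iff (1:ℝ)).mpr ⟨m, by simp⟩
  -- continuity
  have hGc : ∀ i, Continuous (G i) := by
    intro i
    refine ((QuotientAddGroup.isQuotientMap_mk (AddSubgroup.zmultiples (1:ℝ))).continuous_iff).mpr ?_
    show Continuous fun t : ℝ => (QuotientAddGroup.mk (ψ (t • bR i)) : F ⧸ N)
    exact (QuotientAddGroup.isQuotientMap_mk N).continuous.comp
      (ψ.continuous_of_finiteDimensional.comp (continuous_id.smul continuous_const))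
  have hφc : Continuous φ := by
    have : ⇑φ = fun u => ∑ i, G i (u i) := funext hφ_apply
    rw [this]
    exact continuous_finset_sum _ fun i _ => (hGc i).comp (continuous_apply i)
  refine ⟨φ, hφc.isClosedEmbedding hinj, ?_⟩
  ext y
  constructor
  · rintro ⟨u, rfl⟩
    obtain ⟨t, rfl⟩ := hrep u
    rw [key]
    exact ⟨∑ i, t i • bR i, rfl⟩
  · rintro ⟨x, rfl⟩
    refine ⟨fun i => (QuotientAddGroup.mk (bR.repr x i) : AddCircle (1:ℝ)), ?_⟩
    rw [key]
    congr 1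
    rw [show ∑ i, bR.repr x i • bR i = x from bR.sum_repr x]


section PairLemmas

variable {r₁ r₂ : ℕ}

lemma pairAmb_comm (a b : Amb r₁ r₂) : pairAmb a b = pairAmb b a := by
  simpa using (pairB_symm (r₁ := r₁) (r₂ := r₂)).eq a b

@[simp] lemma pairAmb_zero_left (x : Amb r₁ r₂) : pairAmb 0 x = 0 := by
  simp [pairAmb]

@[simp] lemma pairAmb_zero_right (ξ : Amb r₁ r₂) : pairAmb ξ 0 = 0 := by
  simpa using map_zero (pairB r₁ r₂ ξ)

lemma pairAmb_neg_left (a x : Amb r₁ r₂) : pairAmb (-a) x = -pairAmb a x := by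
  rw [pairAmb_comm, pairAmb_comm a x]
  exact map_neg (pairB r₁ r₂ x) a

lemma pairAmb_add_right (ξ a b : Amb r₁ r₂) :
    pairAmb ξ (a + b) = pairAmb ξ a + pairAmb ξ b := by
  simpa using map_add (pairB r₁ r₂ ξ) a b

lemma pairAmb_sub_right (ξ a b : Amb r₁ r₂) :
    pairAmb ξ (a - b) = pairAmb ξ a - pairAmb ξ b := by
  simpa using map_sub (pairB r₁ r₂ ξ) a b

end PairLemmas

end TkAux

theorem Tk_isomorphic_to_torus
    {K : Type} [Field K] [NumberField K] (r r₁ r₂ d : ℕ)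
    (hr : r + 1 = r₁ + r₂) (hr2 : 2 ≤ r)
    (hd : Module.finrank ℚ K = d) (hd2 : r₁ + 2 * r₂ = d)
    (σR : Fin r₁ → (K →+* ℝ)) (σC : Fin r₂ → (K →+* ℂ))
    (hσR : Function.Injective σR) (hσC : Function.Injective σC)
    (hσCconj : ∀ j j' : Fin r₂, (starRingEnd ℂ).comp (σC j) ≠ σC j')
    (hCM : ¬(r₁ = 0 ∧ ∃ F : IntermediateField ℚ K, Module.finrank F K = 2 ∧
        ∀ φ : F →+* ℂ, ∀ x : F, (φ x).im = 0))
    (Γ : AddSubgroup (Amb r₁ r₂))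
    (hΓK : ∀ γ ∈ Γ, ∃ θ : K, embK σR σC θ = γ)
    (hΓdisc : DiscreteTopology Γ)
    (hΓcocpt : CompactSpace (Amb r₁ r₂ ⧸ Γ))
    (hΓcomm₁ : Γ.relIndex (ringLat σR σC) ≠ 0)
    (hΓcomm₂ : (ringLat σR σC).relIndex Γ ≠ 0)
    :
    ∀ κ : Option K,
      ∃ φ : (Fin d → AddCircle (1 : ℝ)) →+ ((Amb r₁ r₂ × Amb r₁ r₂) ⧸ Γ.prod Γ),
        Topology.IsClosedEmbedding φ ∧ Set.range φ = Tk σR σC Γ κ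
    := by
  classical
  intro κ
  -- dimension of the ambient space
  have hE : Module.finrank ℝ (Amb r₁ r₂) = d := by
    rw [Module.finrank_prod, Module.finrank_pi, Module.finrank_pi_fintype]
    simp only [Complex.finrank_real_complex, Finset.sum_const, Fintype.card_fin,
      Finset.card_univ, smul_eq_mul]
    omega
  -- Γ spans
  have hspanΓ : Submodule.span ℝ (Γ : Set (Amb r₁ r₂)) = ⊤ :=
    TkAux.span_top_of_compactQuotient Γ hΓcocpt
  -- Γ × Γ is closed
  have hNclosed : IsClosed ((Γ.prod Γ : AddSubgroup (Amb r₁ r₂ × Amb r₁ r₂)) :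
      Set (Amb r₁ r₂ × Amb r₁ r₂)) := by
    have h1 : IsClosed (Γ : Set (Amb r₁ r₂)) := AddSubgroup.isClosed_of_discrete
    have h2 : ((Γ.prod Γ : AddSubgroup (Amb r₁ r₂ × Amb r₁ r₂)) :
        Set (Amb r₁ r₂ × Amb r₁ r₂)) = (Γ : Set (Amb r₁ r₂)) ×ˢ (Γ : Set (Amb r₁ r₂)) := rfl
    rw [h2]
    exact h1.prod h1
  -- the lattice Γ as a ℤ-submodule, with its ℤ-lattice structure
  set B : LinearMap.BilinForm ℝ (Amb r₁ r₂) := TkAux.pairB r₁ r₂ with hB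
  set LΓ : Submodule ℤ (Amb r₁ r₂) := AddSubgroup.toIntSubmodule Γ with hLΓ
  haveI : DiscreteTopology LΓ := hΓdisc
  haveI : IsZLattice ℝ LΓ := ⟨by rw [hLΓ, AddSubgroup.coe_toIntSubmodule]; exact hspanΓ⟩
  -- translation between `hatX` and the dual lattice
  have hhatX : ∀ ξ : Amb r₁ r₂, ξ ∈ hatX Γ ↔ ξ ∈ B.dualSubmodule LΓ := by
    intro ξ
    constructor
    · intro h γ hγ
      obtain ⟨m, hm⟩ := h γ hγ
      exact Submodule.mem_one.mpr ⟨m, by simpa [hB] using hm.symm⟩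
    · intro h γ hγ
      obtain ⟨m, hm⟩ := Submodule.mem_one.mp (h γ hγ)
      exact ⟨m, by simpa [hB] using hm.symm⟩
  cases κ with
  | none =>
    obtain ⟨φ, hemb, hrange⟩ := TkAux.torus_exists d hE
      (LinearMap.prod (0 : Amb r₁ r₂ →ₗ[ℝ] Amb r₁ r₂) LinearMap.id) (Γ.prod Γ) hNclosed Γ
      (fun x => by simp [AddSubgroup.mem_prod, Γ.zero_mem]) hΓdisc hspanΓ
    refine ⟨φ, hemb, ?_⟩
    rw [hrange]
    ext y
    constructor
    · rintro ⟨x, rfl⟩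
      refine ⟨((0 : Amb r₁ r₂), x), rfl, ?_⟩
      rintro ξ ⟨hξ1, hξ2⟩
      refine ⟨0, ?_⟩
      show pairAmb ξ.1 0 + pairAmb ξ.2 x = ((0 : ℤ) : ℝ)
      rw [hξ2]
      simp [TkAux.pairAmb_zero_left, TkAux.pairAmb_zero_right]
    · rintro ⟨x', hx', hcond⟩
      have h1 : x'.1 ∈ LΓ := by
        rw [← TkAux.bidual_eq B TkAux.pairB_nondeg TkAux.pairB_symm LΓ]
        intro ξ hξ
        obtain ⟨m, hm⟩ := hcond (ξ, 0) ⟨(hhatX ξ).mpr hξ, rfl⟩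
        refine Submodule.mem_one.mpr ⟨m, ?_⟩
        have hm' : pairAmb ξ x'.1 = (m : ℝ) := by
          simpa [TkAux.pairAmb_zero_left] using hm
        have : B x'.1 ξ = pairAmb ξ x'.1 := TkAux.pairAmb_comm x'.1 ξ
        rw [this, hm']
        simp
      refine ⟨x'.2, ?_⟩
      rw [← hx']
      refine (QuotientAddGroup.eq).mpr ?_
      have heq : -((LinearMap.prod (0 : Amb r₁ r₂ →ₗ[ℝ] Amb r₁ r₂) LinearMap.id) x'.2) + x'
          = (x'.1, (0 : Amb r₁ r₂)) := by
        refine Prod.ext ?_ ?_ <;> simp [LinearMap.prod_apply]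
      rw [heq]
      exact AddSubgroup.mem_prod.mpr ⟨h1, Γ.zero_mem⟩
  | some κ =>
    set mulκ : Amb r₁ r₂ →ₗ[ℝ] Amb r₁ r₂ := TkAux.mulKL σR σC κ with hmulκ
    set ψ : Amb r₁ r₂ →ₗ[ℝ] Amb r₁ r₂ × Amb r₁ r₂ := LinearMap.prod LinearMap.id mulκ with hψ
    obtain ⟨n, hn, hnκ⟩ := TkAux.exists_nsmul_mulK σR σC Γ hΓcomm₁ hΓcomm₂ κ
    set Γκ : AddSubgroup (Amb r₁ r₂) := (Γ.prod Γ).comap ψ.toAddMonoidHom with hΓκdef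
    have hΓκ_mem : ∀ x : Amb r₁ r₂, x ∈ Γκ ↔ (x ∈ Γ ∧ mulK σR σC κ x ∈ Γ) := by
      intro x
      rw [hΓκdef, AddSubgroup.mem_comap, AddSubgroup.mem_prod]
      exact Iff.rfl
    have hΓκle : (Γκ : Set (Amb r₁ r₂)) ⊆ (Γ : Set (Amb r₁ r₂)) :=
      fun x hx => ((hΓκ_mem x).mp hx).1
    haveI hΓκdisc : DiscreteTopology Γκ := DiscreteTopology.of_subset hΓdisc hΓκle
    have hsmulΓκ : ∀ γ ∈ Γ, n • γ ∈ Γκ := by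
      intro γ hγ
      refine (hΓκ_mem _).mpr ⟨AddSubgroup.nsmul_mem Γ hγ n, ?_⟩
      rw [TkAux.mulK_nsmul]
      exact hnκ γ hγ
    have hΓκspan : Submodule.span ℝ (Γκ : Set (Amb r₁ r₂)) = ⊤ := by
      rw [eq_top_iff, ← hspanΓ]
      refine Submodule.span_le.mpr ?_
      intro γ hγ
      have h1 : γ = (n : ℝ)⁻¹ • ((n : ℝ) • γ) := (inv_smul_smul₀ (by exact_mod_cast hn) γ).symm
      rw [h1, Nat.cast_smul_eq_nsmul]
      exact Submodule.smul_mem _ _ (Submodule.subset_span (hsmulΓκ γ hγ))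
    obtain ⟨φ, hemb, hrange⟩ := TkAux.torus_exists d hE ψ (Γ.prod Γ) hNclosed Γκ
      (fun x => Iff.rfl) hΓκdisc hΓκspan
    refine ⟨φ, hemb, ?_⟩
    rw [hrange]
    set M : Submodule ℤ (Amb r₁ r₂) := LΓ ⊔ Submodule.map (mulκ.restrictScalars ℤ) LΓ with hM
    have hMle : ∀ x ∈ (M : Set (Amb r₁ r₂)), n • x ∈ Γ := by
      intro x hx
      obtain ⟨a, ha, b', hb', rfl⟩ := Submodule.mem_sup.mp hx
      obtain ⟨b, hb, rfl⟩ := hb'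
      rw [smul_add]
      refine Γ.add_mem (AddSubgroup.nsmul_mem Γ ha n) ?_
      exact hnκ b hb
    haveI hMdisc : DiscreteTopology M :=
      TkAux.discrete_of_nsmul_le Γ (M : Set (Amb r₁ r₂)) n hn hMle
    haveI hMZ : IsZLattice ℝ M := by
      refine ⟨eq_top_iff.mpr ?_⟩
      rw [← hspanΓ]
      refine Submodule.span_mono ?_
      intro γ hγ
      exact Submodule.mem_sup_left (show γ ∈ LΓ from hγ)
    have hdualM : ∀ ξ : Amb r₁ r₂, ξ ∈ B.dualSubmodule M ↔
        (ξ ∈ hatX Γ ∧ mulK σR σC κ ξ ∈ hatX Γ) := by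
      intro ξ
      constructor
      · intro h
        constructor
        · refine (hhatX ξ).mpr ?_
          intro γ hγ
          exact h γ (Submodule.mem_sup_left hγ)
        · refine (hhatX _).mpr ?_
          intro γ hγ
          have h2 := h ((mulκ.restrictScalars ℤ) γ)
            (Submodule.mem_sup_right (Submodule.mem_map_of_mem hγ))
          have e1 : B (mulK σR σC κ ξ) γ = B ξ ((mulκ.restrictScalars ℤ) γ) :=
            TkAux.pair_mulK σR σC κ ξ γ
          rw [e1]
          exact h2
      · rintro ⟨h1, h2⟩ y hy
        obtain ⟨a, ha, b', hb', rfl⟩ := Submodule.mem_sup.mp hy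
        obtain ⟨b, hb, rfl⟩ := hb'
        have e1 : B ξ (a + (mulκ.restrictScalars ℤ) b)
            = B ξ a + B ξ ((mulκ.restrictScalars ℤ) b) := map_add _ _ _
        rw [e1]
        refine add_mem ((hhatX ξ).mp h1 a ha) ?_
        have e2 : B ξ ((mulκ.restrictScalars ℤ) b) = B (mulK σR σC κ ξ) b :=
          (TkAux.pair_mulK σR σC κ ξ b).symm
        rw [e2]
        exact (hhatX _).mp h2 b hb
    ext y
    constructor
    · rintro ⟨x, rfl⟩
      refine ⟨ψ x, rfl, ?_⟩
      rintro ξ ⟨hξ1, hξ2, hξ0⟩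
      refine ⟨0, ?_⟩
      have hξneg : ξ.1 = -(mulK σR σC κ ξ.2) := eq_neg_of_add_eq_zero_left hξ0
      show pairAmb ξ.1 x + pairAmb ξ.2 (mulK σR σC κ x) = ((0 : ℤ) : ℝ)
      rw [hξneg, TkAux.pairAmb_neg_left, TkAux.pair_mulK]
      simp
    · rintro ⟨x', hx', hcond⟩
      have hδ : x'.2 - mulK σR σC κ x'.1 ∈ M := by
        rw [← TkAux.bidual_eq B TkAux.pairB_nondeg TkAux.pairB_symm M]
        intro ξ hξ
        obtain ⟨hξa, hξb⟩ := (hdualM ξ).mp hξ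
        have hmemSq : ((-(mulK σR σC κ ξ), ξ) : Amb r₁ r₂ × Amb r₁ r₂)
            ∈ hatSq σR σC Γ (some κ) := by
          refine ⟨?_, hξa, by simp⟩
          intro γ hγ
          obtain ⟨m, hm⟩ := hξb γ hγ
          exact ⟨-m, by rw [TkAux.pairAmb_neg_left, hm]; push_cast; ring⟩
        obtain ⟨m, hm⟩ := hcond _ hmemSq
        refine Submodule.mem_one.mpr ⟨m, ?_⟩
        have e2 : B (x'.2 - mulK σR σC κ x'.1) ξ
            = pairAmb ξ x'.2 - pairAmb ξ (mulK σR σC κ x'.1) := by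
          rw [show B (x'.2 - mulK σR σC κ x'.1) ξ
              = pairAmb ξ (x'.2 - mulK σR σC κ x'.1) from TkAux.pairAmb_comm _ _,
            TkAux.pairAmb_sub_right]
        rw [e2]
        have e3 : pairAmb ξ (mulK σR σC κ x'.1) = -(pairAmb (-(mulK σR σC κ ξ)) x'.1) := by
          rw [TkAux.pairAmb_neg_left, neg_neg, TkAux.pair_mulK]
        rw [e3]
        have : algebraMap ℤ ℝ m = (m : ℝ) := by simp
        rw [this]
        linarith [hm]
      obtain ⟨aa, haa, bb', hbb', hab⟩ := Submodule.mem_sup.mp hδ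
      obtain ⟨bb, hbbΓ, rfl⟩ := hbb'
      refine ⟨x'.1 + bb, ?_⟩
      rw [← hx']
      refine (QuotientAddGroup.eq).mpr ?_
      have hmul : mulK σR σC κ (x'.1 + bb) = mulK σR σC κ x'.1 + mulK σR σC κ bb :=
        map_add mulκ _ _
      have haa' : aa = x'.2 - mulK σR σC κ x'.1 - mulK σR σC κ bb := by
        have h' : aa + mulK σR σC κ bb = x'.2 - mulK σR σC κ x'.1 := hab
        rw [eq_sub_iff_add_eq]
        exact h'
      have heq : -(ψ (x'.1 + bb)) + x' = (-bb, aa) := by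
        refine Prod.ext ?_ ?_
        · show -(x'.1 + bb) + x'.1 = -bb
          abel
        · show -(mulK σR σC κ (x'.1 + bb)) + x'.2 = aa
          rw [hmul, haa']
          abel
      rw [heq]
      exact AddSubgroup.mem_prod.mpr ⟨Γ.neg_mem hbbΓ, haa⟩


end
end

section
/- In the number field model, for every κ ∈ K ∪ {∞} one has T^κ = π_Δ(V^κ); that is, the subtorus T^κ is exactly the image in X² of the d-dimensional linear subspace V^κ of (ℝ^{r₁}⊕ℂ^{r₂})². -/
noncomputable section

section MyHelpers

lemma pairAmb_add_left {r₁ r₂ : ℕ} (ξ ξ' x : Amb r₁ r₂) :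
    pairAmb (ξ + ξ') x = pairAmb ξ x + pairAmb ξ' x := by
  simp only [pairAmb, Prod.fst_add, Prod.snd_add, Pi.add_apply, add_mul, Complex.add_re,
    mul_add, Finset.sum_add_distrib]
  ring

lemma pairAmb_smul_left {r₁ r₂ : ℕ} (c : ℝ) (ξ x : Amb r₁ r₂) :
    pairAmb (c • ξ) x = c * pairAmb ξ x := by
  simp only [pairAmb, Prod.smul_fst, Prod.smul_snd, Pi.smul_apply, smul_eq_mul,
    Complex.real_smul, mul_add, Finset.mul_sum]
  congr 1
  · exact Finset.sum_congr rfl fun i _ => by ring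
  · refine Finset.sum_congr rfl fun j _ => ?_
    rw [mul_assoc, Complex.re_ofReal_mul]; ring

lemma pairAmb_add_right {r₁ r₂ : ℕ} (ξ x x' : Amb r₁ r₂) :
    pairAmb ξ (x + x') = pairAmb ξ x + pairAmb ξ x' := by
  simp only [pairAmb, Prod.fst_add, Prod.snd_add, Pi.add_apply, mul_add, Complex.add_re,
    Finset.sum_add_distrib]
  ring

lemma pairAmb_smul_right {r₁ r₂ : ℕ} (c : ℝ) (ξ x : Amb r₁ r₂) :
    pairAmb ξ (c • x) = c * pairAmb ξ x := by
  simp only [pairAmb, Prod.smul_fst, Prod.smul_snd, Pi.smul_apply, smul_eq_mul,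
    Complex.real_smul, mul_add, Finset.mul_sum]
  congr 1
  · exact Finset.sum_congr rfl fun i _ => by ring
  · refine Finset.sum_congr rfl fun j _ => ?_
    rw [mul_left_comm (ξ.2 j), Complex.re_ofReal_mul]; ring

/-- The pairing, as a bilinear form. -/
def pairB {r₁ r₂ : ℕ} : LinearMap.BilinForm ℝ (Amb r₁ r₂) :=
  LinearMap.mk₂ ℝ pairAmb pairAmb_add_left
    (fun c ξ x => by rw [pairAmb_smul_left]; rfl)
    pairAmb_add_right
    (fun c ξ x => by rw [pairAmb_smul_right]; rfl)

@[simp] lemma pairB_apply {r₁ r₂ : ℕ} (ξ x : Amb r₁ r₂) : pairB ξ x = pairAmb ξ x := rfl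

lemma pairAmb_zero_left {r₁ r₂ : ℕ} (x : Amb r₁ r₂) : pairAmb (0 : Amb r₁ r₂) x = 0 := by
  simp [pairAmb]

lemma pairAmb_zero_right {r₁ r₂ : ℕ} (ξ : Amb r₁ r₂) : pairAmb ξ (0 : Amb r₁ r₂) = 0 := by
  simp [pairAmb]

lemma pairAmb_neg_left {r₁ r₂ : ℕ} (ξ x : Amb r₁ r₂) : pairAmb (-ξ) x = -pairAmb ξ x :=
  LinearMap.map_neg₂ pairB ξ x

lemma pairAmb_sub_right {r₁ r₂ : ℕ} (ξ x y : Amb r₁ r₂) :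
    pairAmb ξ (x - y) = pairAmb ξ x - pairAmb ξ y :=
  (pairB ξ).map_sub x y

end MyHelpers

section MyHelpers2

lemma pairB_nondeg {r₁ r₂ : ℕ} : (pairB (r₁ := r₁) (r₂ := r₂)).Nondegenerate := by
  refine (LinearMap.IsRefl.nondegenerate_iff_separatingLeft (fun x y hxy => ?_)).mpr ?_
  · have hs : pairAmb y x = pairAmb x y := by unfold pairAmb; simp only [mul_comm]
    simpa [hs] using hxy
  intro ξ h
  have h1 : ∀ i, ξ.1 i = 0 := by
    intro i
    have := h (Pi.single i 1, 0)
    simp only [pairB_apply, pairAmb, Pi.single_apply] at this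
    simpa [mul_ite, Finset.sum_ite_eq'] using this
  have h2 : ∀ j, ξ.2 j = 0 := by
    intro j
    have hre := h (0, Pi.single j 1)
    have him := h (0, Pi.single j Complex.I)
    simp only [pairB_apply, pairAmb, Pi.single_apply] at hre him
    simp only [mul_ite, mul_one, mul_zero, Complex.zero_re, Finset.sum_ite_eq',
      Finset.mem_univ, if_true, Pi.zero_apply, zero_mul, Finset.sum_const_zero,
      zero_add, apply_ite Complex.re, apply_ite (2 * ·)] at hre him
    have hre' : (ξ.2 j).re = 0 := by
      by_contra hc
      rcases hre with hre
      simp [Complex.zero_re] at hre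
      exact hc hre
    have him' : (ξ.2 j).im = 0 := by
      have : (ξ.2 j * Complex.I).re = 0 := by
        rcases him with him
        simpa using him
      simpa [Complex.mul_re, Complex.I_re, Complex.I_im] using this
    exact Complex.ext hre' him'
  have : ξ.1 = 0 := funext h1
  have h2' : ξ.2 = 0 := funext h2
  exact Prod.ext this h2'

end MyHelpers2

section MyHelpers3

variable {K : Type} [Field K] {r₁ r₂ : ℕ} (σR : Fin r₁ → (K →+* ℝ)) (σC : Fin r₂ → (K →+* ℂ))

lemma mulK_add (θ : K) (x y : Amb r₁ r₂) :
    mulK σR σC θ (x + y) = mulK σR σC θ x + mulK σR σC θ y := by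
  unfold mulK
  refine Prod.ext ?_ ?_ <;> funext i <;> simp [mul_add]

lemma mulK_zero (θ : K) : mulK σR σC θ (0 : Amb r₁ r₂) = 0 := by
  unfold mulK
  refine Prod.ext ?_ ?_ <;> funext i <;> simp

/-- `mulK` as an additive monoid hom. -/
def mulAdd (θ : K) : Amb r₁ r₂ →+ Amb r₁ r₂ :=
  AddMonoidHom.mk' (mulK σR σC θ) (mulK_add σR σC θ)

@[simp] lemma mulAdd_apply (θ : K) (x : Amb r₁ r₂) : mulAdd σR σC θ x = mulK σR σC θ x := rfl

lemma mulK_zsmul (θ : K) (c : ℤ) (x : Amb r₁ r₂) :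
    mulK σR σC θ (c • x) = c • mulK σR σC θ x :=
  (mulAdd σR σC θ).map_zsmul c x

lemma pairAmb_mulK (θ : K) (ξ x : Amb r₁ r₂) :
    pairAmb (mulK σR σC θ ξ) x = pairAmb ξ (mulK σR σC θ x) := by
  unfold pairAmb mulK
  congr 1
  · exact Finset.sum_congr rfl fun i _ => by ring
  · exact Finset.sum_congr rfl fun j _ => by simp only []; rw [mul_assoc, mul_left_comm]

lemma mulK_embK (θ θ' : K) : mulK σR σC θ (embK σR σC θ') = embK σR σC (θ * θ') := by
  unfold mulK embK
  refine Prod.ext ?_ ?_ <;> funext i <;> simp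

/-- `embK` as an additive monoid hom. -/
def embAdd : K →+ Amb r₁ r₂ where
  toFun := embK σR σC
  map_zero' := by unfold embK; refine Prod.ext ?_ ?_ <;> funext i <;> simp
  map_add' a b := by unfold embK; refine Prod.ext ?_ ?_ <;> funext i <;> simp

@[simp] lemma embAdd_apply (θ : K) : embAdd σR σC θ = embK σR σC θ := rfl

lemma embK_zsmul (c : ℤ) (θ : K) : embK σR σC (c • θ) = c • embK σR σC θ :=
  (embAdd σR σC).map_zsmul c θ

lemma hatX_neg {Γ : AddSubgroup (Amb r₁ r₂)} {ξ : Amb r₁ r₂} (h : ξ ∈ hatX Γ) :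
    -ξ ∈ hatX Γ := by
  intro γ hγ
  obtain ⟨m, hm⟩ := h γ hγ
  exact ⟨-m, by rw [pairAmb_neg_left, hm]; push_cast; ring⟩

end MyHelpers3

section MyHelpers4

open Module

/-- Double duality: if `x` pairs integrally with everything that pairs integrally with a
full lattice `M`, then `x ∈ M`. -/
lemma mem_of_forall_dual {r₁ r₂ : ℕ} (M : AddSubgroup (Amb r₁ r₂))
    (hdisc : DiscreteTopology M)
    (hspan : Submodule.span ℝ (M : Set (Amb r₁ r₂)) = ⊤)
    (x : Amb r₁ r₂)
    (hx : ∀ ξ : Amb r₁ r₂, (∀ m ∈ M, ∃ k : ℤ, pairAmb ξ m = (k : ℝ)) →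
      ∃ k : ℤ, pairAmb ξ x = (k : ℝ)) :
    x ∈ M := by
  classical
  set L : Submodule ℤ (Amb r₁ r₂) := AddSubgroup.toIntSubmodule M with hL
  haveI : DiscreteTopology L := hdisc
  haveI : IsZLattice ℝ L := ⟨by rw [show (L : Set (Amb r₁ r₂)) = (M : Set (Amb r₁ r₂)) from rfl]; exact hspan⟩
  haveI := ZLattice.module_finite ℝ L
  haveI := ZLattice.module_free ℝ L
  set ι := Module.Free.ChooseBasisIndex ℤ L with hι
  haveI : Fintype ι := Module.Free.ChooseBasisIndex.fintype ℤ L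
  let bZ : Basis ι ℤ L := Module.Free.chooseBasis ℤ L
  let bR : Basis ι ℝ (Amb r₁ r₂) := bZ.ofZLatticeBasis ℝ L
  let db : Basis ι ℝ (Amb r₁ r₂) := pairB.dualBasis pairB_nondeg bR
  -- key : pairing against the dual basis computes coordinates
  have key : ∀ (y : Amb r₁ r₂) (i : ι), pairAmb (db i) y = bR.repr y i := by
    intro y i
    conv_lhs => rw [show y = ∑ j, bR.repr y j • bR j from (bR.sum_repr y).symm]
    rw [show pairAmb (db i) (∑ j, bR.repr y j • bR j)
        = pairB (db i) (∑ j, bR.repr y j • bR j) from rfl, map_sum]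
    simp only [map_smul, smul_eq_mul]
    rw [Finset.sum_congr rfl (fun j _ => by
      rw [show (pairB (db i)) (bR j) = if j = i then (1:ℝ) else 0 from
        pairB.apply_dualBasis_left pairB_nondeg bR i j])]
    simp only [mul_ite, mul_one, mul_zero, Finset.sum_ite_eq', Finset.mem_univ, if_true]
  -- each dual basis vector pairs integrally with M
  have hdb : ∀ i : ι, ∀ m ∈ M, ∃ k : ℤ, pairAmb (db i) m = (k : ℝ) := by
    intro i m hm
    refine ⟨bZ.repr ⟨m, hm⟩ i, ?_⟩
    rw [key m i]
    exact_mod_cast bZ.ofZLatticeBasis_repr_apply ℝ (L := L) ⟨m, hm⟩ i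
  choose k hk using fun i => hx (db i) (hdb i)
  -- now x = ∑ k i • bZ i ∈ M
  have hxrepr : x = ∑ i, (k i : ℤ) • ((bZ i : L) : Amb r₁ r₂) := by
    conv_lhs => rw [show x = ∑ j, bR.repr x j • bR j from (bR.sum_repr x).symm]
    refine Finset.sum_congr rfl fun i _ => ?_
    rw [← key x i, hk i, ← bZ.ofZLatticeBasis_apply ℝ L i, Int.cast_smul_eq_zsmul]
  rw [hxrepr]
  exact AddSubgroup.sum_mem M fun i _ => AddSubgroup.zsmul_mem M (bZ i).2 _

end MyHelpers4

section MyHelpers5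

/-- A subgroup an integer multiple of which lands in a discrete subgroup is discrete. -/
lemma discrete_of_zsmul_subset {r₁ r₂ : ℕ} (Γ M : AddSubgroup (Amb r₁ r₂))
    (hΓdisc : DiscreteTopology Γ) (c : ℤ) (hc : c ≠ 0)
    (h : ∀ m ∈ M, c • m ∈ Γ) : DiscreteTopology M := by
  rw [discreteTopology_iff_isOpen_singleton_zero] at hΓdisc ⊢
  obtain ⟨t, ht, hteq⟩ := isOpen_induced_iff.mp hΓdisc
  have h0t : (0 : Amb r₁ r₂) ∈ t := by
    have : ((0 : Γ) : Amb r₁ r₂) ∈ t := by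
      have : (0 : Γ) ∈ (Subtype.val ⁻¹' t : Set Γ) := by rw [hteq]; rfl
      exact this
    simpa using this
  refine isOpen_induced_iff.mpr ⟨(fun y : Amb r₁ r₂ => c • y) ⁻¹' t, (continuous_zsmul c).isOpen_preimage t ht, ?_⟩
  ext ⟨m, hm⟩
  simp only [Set.mem_preimage, Set.mem_singleton_iff]
  constructor
  · intro hmem
    have hcm : c • m ∈ Γ := h m hm
    have : (⟨c • m, hcm⟩ : Γ) ∈ (Subtype.val ⁻¹' t : Set Γ) := hmem
    rw [hteq] at this
    have hzero : c • m = 0 := congrArg Subtype.val this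
    have : ((c : ℝ)) • m = 0 := by rw [Int.cast_smul_eq_zsmul]; exact hzero
    have := (smul_eq_zero.mp this).resolve_left (by exact_mod_cast hc)
    exact Subtype.ext this
  · intro hmem
    have : m = 0 := congrArg Subtype.val hmem
    simp only [this, smul_zero]
    exact h0t

/-- A discrete cocompact subgroup spans the whole space. -/
lemma span_top_of_cocompact {r₁ r₂ : ℕ} (Γ : AddSubgroup (Amb r₁ r₂))
    (hcpt : CompactSpace (Amb r₁ r₂ ⧸ Γ)) :
    Submodule.span ℝ (Γ : Set (Amb r₁ r₂)) = ⊤ := by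
  by_contra hne
  set p := Submodule.span ℝ (Γ : Set (Amb r₁ r₂)) with hp
  obtain ⟨x, hx⟩ : ∃ x, x ∉ p := by
    by_contra hcon
    push_neg at hcon
    exact hne (Submodule.eq_top_iff'.mpr hcon)
  have hxq : Submodule.Quotient.mk (p := p) x ≠ 0 := by
    simpa [Submodule.Quotient.mk_eq_zero] using hx
  obtain ⟨φ, hφ⟩ : ∃ φ : Module.Dual ℝ (Amb r₁ r₂ ⧸ p), φ (Submodule.Quotient.mk x) ≠ 0 := by
    by_contra hcon
    push_neg at hcon
    exact hxq ((Module.forall_dual_apply_eq_zero_iff ℝ _).mp hcon)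
  set f : Amb r₁ r₂ →ₗ[ℝ] ℝ := φ.comp p.mkQ with hf
  have hfΓ : ∀ γ ∈ Γ, f γ = 0 := by
    intro γ hγ
    have : (γ : Amb r₁ r₂) ∈ p := Submodule.subset_span hγ
    simp [hf, Submodule.Quotient.mk_eq_zero, this, (Submodule.Quotient.mk_eq_zero p).mpr this]
  have hcompat : ∀ a b : Amb r₁ r₂, (QuotientAddGroup.leftRel Γ) a b → f a = f b := by
    intro a b hab
    have hab' : -a + b ∈ Γ := (QuotientAddGroup.leftRel_apply).mp hab
    have : f (-a + b) = 0 := hfΓ _ hab'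
    rw [map_add, map_neg] at this
    linarith
  set F : (Amb r₁ r₂ ⧸ Γ) → ℝ := fun q => Quotient.liftOn' q f hcompat with hF
  have hFc : Continuous F := (f.continuous_of_finiteDimensional).quotient_liftOn' _
  have hFmk : ∀ y : Amb r₁ r₂, F (QuotientAddGroup.mk y) = f y := fun y => rfl
  have hFsurj : Function.Surjective F := by
    intro s
    refine ⟨QuotientAddGroup.mk ((s / f x) • x), ?_⟩
    rw [hFmk, map_smul, smul_eq_mul, div_mul_cancel₀]
    exact hφ
  have : IsCompact (Set.univ : Set ℝ) := by
    rw [← Set.range_eq_univ.mpr hFsurj]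
    exact isCompact_range hFc
  exact noncompact_univ ℝ this

end MyHelpers5

section MyHelpers6

variable {K : Type} [Field K] [NumberField K] {r₁ r₂ : ℕ}
  (σR : Fin r₁ → (K →+* ℝ)) (σC : Fin r₂ → (K →+* ℂ))

lemma mem_ringLat_iff (x : Amb r₁ r₂) :
    x ∈ ringLat σR σC ↔
      ∃ a : NumberField.RingOfIntegers K,
        embK σR σC (algebraMap (NumberField.RingOfIntegers K) K a) = x := by
  have hrange : (Set.range fun a : NumberField.RingOfIntegers K =>
      embK σR σC (algebraMap (NumberField.RingOfIntegers K) K a))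
      = (((embAdd σR σC).comp
          (algebraMap (NumberField.RingOfIntegers K) K).toAddMonoidHom).range :
            Set (Amb r₁ r₂)) := by
    ext y
    simp [AddMonoidHom.mem_range]
  rw [ringLat, hrange, AddSubgroup.closure_eq]
  simp [AddMonoidHom.mem_range]

/-- Commensurability: multiplication by `κ ∈ K` almost preserves `Γ`. -/
lemma exists_zsmul_mulK_mem (Γ : AddSubgroup (Amb r₁ r₂))
    (hΓK : ∀ γ ∈ Γ, ∃ θ : K, embK σR σC θ = γ)
    (hinj : Function.Injective (embK σR σC))
    (hΓcomm₁ : Γ.relIndex (ringLat σR σC) ≠ 0)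
    (hΓcomm₂ : (ringLat σR σC).relIndex Γ ≠ 0)
    (κ : K) :
    ∃ c : ℤ, c ≠ 0 ∧ ∀ γ ∈ Γ, c • mulK σR σC κ γ ∈ Γ := by
  classical
  have halg : IsAlgebraic ℤ κ :=
    (IsFractionRing.isAlgebraic_iff ℤ ℚ K).mpr (Algebra.IsAlgebraic.isAlgebraic κ)
  obtain ⟨b, hb0, hbint⟩ := halg.exists_integral_multiple
  let A₀ : NumberField.RingOfIntegers K := (⟨b • κ, hbint⟩ : integralClosure ℤ K)
  have hA₀ : algebraMap (NumberField.RingOfIntegers K) K A₀ = algebraMap ℤ K b * κ :=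
    Algebra.smul_def b κ
  set N₁ : ℕ := (ringLat σR σC).relIndex Γ with hN₁
  set N₂ : ℕ := Γ.relIndex (ringLat σR σC) with hN₂
  have hΓ_to_ring : ∀ γ ∈ Γ, (N₁ : ℤ) • γ ∈ ringLat σR σC := by
    intro γ hγ
    have h := ((ringLat σR σC (K := K)).addSubgroupOf Γ).nsmul_index_mem (⟨γ, hγ⟩ : Γ)
    rw [AddSubgroup.mem_addSubgroupOf] at h
    have heq : (N₁ : ℤ) • γ
        = ((((ringLat σR σC (K := K)).addSubgroupOf Γ).index • (⟨γ, hγ⟩ : Γ) : Γ) : Amb r₁ r₂) := by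
      rw [show (((ringLat σR σC (K := K)).addSubgroupOf Γ)).index = N₁ from rfl, natCast_zsmul]
      rfl
    rw [heq]; exact h
  have hring_to_Γ : ∀ x ∈ ringLat σR σC (K := K), (N₂ : ℤ) • x ∈ Γ := by
    intro x hx
    have h := (Γ.addSubgroupOf (ringLat σR σC)).nsmul_index_mem
      (⟨x, hx⟩ : ringLat σR σC)
    rw [AddSubgroup.mem_addSubgroupOf] at h
    have heq : (N₂ : ℤ) • x
        = (((Γ.addSubgroupOf (ringLat σR σC (K := K))).index • (⟨x, hx⟩ : ringLat σR σC) :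
            ringLat σR σC) : Amb r₁ r₂) := by
      rw [show (Γ.addSubgroupOf (ringLat σR σC (K := K))).index = N₂ from rfl, natCast_zsmul]
      rfl
    rw [heq]; exact h
  refine ⟨(N₂ : ℤ) * b * (N₁ : ℤ), by
    have h1 : (N₂ : ℤ) ≠ 0 := by exact_mod_cast hΓcomm₁
    have h2 : (N₁ : ℤ) ≠ 0 := by exact_mod_cast hΓcomm₂
    exact mul_ne_zero (mul_ne_zero h1 hb0) h2, ?_⟩
  intro γ hγ
  obtain ⟨θ, hθ⟩ := hΓK γ hγ
  obtain ⟨a₁, ha₁⟩ := (mem_ringLat_iff σR σC _).mp (hΓ_to_ring γ hγ)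
  have hθ₁ : algebraMap (NumberField.RingOfIntegers K) K a₁ = (N₁ : ℤ) • θ := by
    apply hinj
    rw [ha₁, ← hθ, embK_zsmul]
  have hcalc : ((N₂ : ℤ) * b * (N₁ : ℤ)) • (κ * θ)
      = (N₂ : ℤ) • (algebraMap (NumberField.RingOfIntegers K) K (A₀ * a₁)) := by
    rw [map_mul, hA₀, hθ₁]
    rw [mul_smul, mul_smul]
    congr 1
    rw [show b • ((N₁ : ℤ) • (κ * θ)) = b • (κ * ((N₁ : ℤ) • θ)) from by rw [mul_smul_comm]]
    rw [← smul_mul_assoc]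
    congr 1
  have hfin : ((N₂ : ℤ) * b * (N₁ : ℤ)) • mulK σR σC κ γ
      = (N₂ : ℤ) • embK σR σC (algebraMap (NumberField.RingOfIntegers K) K (A₀ * a₁)) := by
    rw [← hθ, mulK_embK, ← embK_zsmul, ← embK_zsmul, hcalc]
  rw [hfin]
  exact hring_to_Γ _ ((mem_ringLat_iff σR σC _).mpr ⟨A₀ * a₁, rfl⟩)

end MyHelpers6


theorem Tk_eq_image_of_Vk
    {K : Type} [Field K] [NumberField K] (r r₁ r₂ d : ℕ)
    (hr : r + 1 = r₁ + r₂) (hr2 : 2 ≤ r)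
    (hd : Module.finrank ℚ K = d) (hd2 : r₁ + 2 * r₂ = d)
    (σR : Fin r₁ → (K →+* ℝ)) (σC : Fin r₂ → (K →+* ℂ))
    (hσR : Function.Injective σR) (hσC : Function.Injective σC)
    (hσCconj : ∀ j j' : Fin r₂, (starRingEnd ℂ).comp (σC j) ≠ σC j')
    (hCM : ¬(r₁ = 0 ∧ ∃ F : IntermediateField ℚ K, Module.finrank F K = 2 ∧
        ∀ φ : F →+* ℂ, ∀ x : F, (φ x).im = 0))
    (Γ : AddSubgroup (Amb r₁ r₂))
    (hΓK : ∀ γ ∈ Γ, ∃ θ : K, embK σR σC θ = γ)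
    (hΓdisc : DiscreteTopology Γ)
    (hΓcocpt : CompactSpace (Amb r₁ r₂ ⧸ Γ))
    (hΓcomm₁ : Γ.relIndex (ringLat σR σC) ≠ 0)
    (hΓcomm₂ : (ringLat σR σC).relIndex Γ ≠ 0)
    :
    ∀ κ : Option K,
      Tk σR σC Γ κ =
        (fun v : Amb r₁ r₂ × Amb r₁ r₂ =>
          (QuotientAddGroup.mk v : (Amb r₁ r₂ × Amb r₁ r₂) ⧸ Γ.prod Γ)) '' Vk σR σC κ
    := by
  have hinj : Function.Injective (embK σR σC) := by
    intro a b hab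
    rcases Nat.eq_zero_or_pos r₁ with h1 | h1
    · have h2 : 0 < r₂ := by omega
      have := congrFun (congrArg Prod.snd hab) ⟨0, h2⟩
      exact (σC ⟨0, h2⟩).injective this
    · have := congrFun (congrArg Prod.fst hab) ⟨0, h1⟩
      exact (σR ⟨0, h1⟩).injective this
  have hspanΓ : Submodule.span ℝ (Γ : Set (Amb r₁ r₂)) = ⊤ :=
    span_top_of_cocompact Γ hΓcocpt
  rintro (_ | κv)
  -- case κ = ∞
  · ext x
    constructor
    · rintro ⟨x', hmk, hint⟩
      have h1 : x'.1 ∈ Γ := by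
        apply mem_of_forall_dual Γ hΓdisc hspanΓ
        intro ξ hξ
        obtain ⟨m, hm⟩ := hint (ξ, 0) ⟨hξ, rfl⟩
        refine ⟨m, ?_⟩
        rw [← hm]
        show pairAmb ξ x'.1 = pairAmb ξ x'.1 + pairAmb 0 x'.2
        rw [pairAmb_zero_left, add_zero]
      refine ⟨(0, x'.2), rfl, ?_⟩
      rw [← hmk, QuotientAddGroup.eq]
      have hval : -((0 : Amb r₁ r₂), x'.2) + x' = (x'.1, (0 : Amb r₁ r₂)) := by
        refine Prod.ext ?_ ?_ <;> simp
      rw [hval]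
      exact AddSubgroup.mem_prod.mpr ⟨h1, AddSubgroup.zero_mem Γ⟩
    · rintro ⟨v, hv, rfl⟩
      refine ⟨v, rfl, ?_⟩
      rintro ξ ⟨hξ1, hξ2⟩
      refine ⟨0, ?_⟩
      have hv1 : v.1 = 0 := hv
      rw [hv1, hξ2, pairAmb_zero_right, pairAmb_zero_left]
      norm_num
  -- case κ ∈ K
  · obtain ⟨c, hc0, hc⟩ := exists_zsmul_mulK_mem σR σC Γ hΓK hinj hΓcomm₁ hΓcomm₂ κv
    set Mf : AddSubgroup (Amb r₁ r₂) := Γ ⊔ Γ.map (mulAdd σR σC κv) with hMf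
    have hMsc : ∀ m ∈ Mf, c • m ∈ Γ := by
      intro m hm
      obtain ⟨γ₁, hγ₁, z, hz, hsum⟩ := AddSubgroup.mem_sup.mp hm
      obtain ⟨γ₂, hγ₂, rfl⟩ := hz
      rw [← hsum, smul_add]
      exact AddSubgroup.add_mem Γ (AddSubgroup.zsmul_mem Γ hγ₁ c) (hc γ₂ hγ₂)
    have hMdisc : DiscreteTopology Mf := discrete_of_zsmul_subset Γ Mf hΓdisc c hc0 hMsc
    have hMspan : Submodule.span ℝ (Mf : Set (Amb r₁ r₂)) = ⊤ := by
      apply top_unique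
      rw [← hspanΓ]
      exact Submodule.span_mono (SetLike.coe_subset_coe.mpr le_sup_left)
    ext x
    constructor
    · rintro ⟨x', hmk, hint⟩
      have hw : x'.2 - mulK σR σC κv x'.1 ∈ Mf := by
        apply mem_of_forall_dual Mf hMdisc hMspan
        intro ξ hξ
        have hξΓ : ξ ∈ hatX Γ := fun γ hγ => hξ γ (AddSubgroup.mem_sup_left hγ)
        have hκξ : mulK σR σC κv ξ ∈ hatX Γ := by
          intro γ hγ
          obtain ⟨m, hm⟩ := hξ (mulK σR σC κv γ)
            (AddSubgroup.mem_sup_right (AddSubgroup.mem_map.mpr ⟨γ, hγ, rfl⟩))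
          exact ⟨m, by rw [pairAmb_mulK]; exact hm⟩
        obtain ⟨m, hm⟩ := hint (-(mulK σR σC κv ξ), ξ)
          ⟨hatX_neg hκξ, hξΓ, by show -(mulK σR σC κv ξ) + mulK σR σC κv ξ = 0; exact neg_add_cancel _⟩
        refine ⟨m, ?_⟩
        rw [pairAmb_sub_right, ← pairAmb_mulK, ← hm]
        show pairAmb ξ x'.2 - pairAmb (mulK σR σC κv ξ) x'.1
          = pairAmb (-(mulK σR σC κv ξ)) x'.1 + pairAmb ξ x'.2
        rw [pairAmb_neg_left]; ring
      obtain ⟨γ₁, hγ₁, z, hz, hsum⟩ := AddSubgroup.mem_sup.mp hw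
      obtain ⟨γ₂, hγ₂, rfl⟩ := hz
      have hγ₁' : γ₁ = x'.2 - mulK σR σC κv x'.1 - mulK σR σC κv γ₂ := by
        have h := hsum
        rw [mulAdd_apply] at h
        exact eq_sub_of_add_eq h
      refine ⟨(x'.1 + γ₂, mulK σR σC κv (x'.1 + γ₂)), rfl, ?_⟩
      rw [← hmk, QuotientAddGroup.eq]
      have hval : -((x'.1 + γ₂, mulK σR σC κv (x'.1 + γ₂)) : Amb r₁ r₂ × Amb r₁ r₂) + x'
          = (-γ₂, γ₁) := by
        rw [hγ₁', mulK_add]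
        refine Prod.ext ?_ ?_
        · show -(x'.1 + γ₂) + x'.1 = -γ₂
          abel
        · show -(mulK σR σC κv x'.1 + mulK σR σC κv γ₂) + x'.2
            = x'.2 - mulK σR σC κv x'.1 - mulK σR σC κv γ₂
          abel
      rw [hval]
      exact AddSubgroup.mem_prod.mpr ⟨AddSubgroup.neg_mem Γ hγ₂, hγ₁⟩
    · rintro ⟨v, hv, rfl⟩
      refine ⟨v, rfl, ?_⟩
      rintro ξ ⟨hξ1, hξ2, hξ0⟩
      refine ⟨0, ?_⟩
      have hv2 : v.2 = mulK σR σC κv v.1 := hv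
      rw [hv2, ← pairAmb_mulK, ← pairAmb_add_left, hξ0, pairAmb_zero_left]
      norm_num

end
end

section
/- In the number field model, for every finite-index subgroup H ≤ ℤ^r, every i ∈ I and every δ > 0, there exists a nonzero n ∈ H such that |Log ζ_i^n| < δ, where Log denotes the principal branch of the complex logarithm. -/
noncomputable section

private lemma floor_eq_abs_lt {x y : ℝ} (h : ⌊x⌋ = ⌊y⌋) : |x - y| < 1 := by
  have h1 := Int.floor_le x
  have h2 := Int.lt_floor_add_one x
  have h3 := Int.floor_le y
  have h4 := Int.lt_floor_add_one y
  rw [h] at h1 h2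
  rw [abs_lt]; constructor <;> linarith

private lemma pigeon (a b α β ε : ℝ) (hε : 0 < ε) :
    ∃ p q : ℤ, ¬(p = 0 ∧ q = 0) ∧ |p * a + q * b| < ε ∧ ∃ k : ℤ, |p * α + q * β - k| < ε := by
  set C0 : ℤ := ⌈(|a| + |b|) / ε⌉ with hC0def
  have hC0 : (0:ℤ) ≤ C0 := Int.ceil_nonneg (by positivity)
  set L : ℤ := ⌈1 / ε⌉ with hLdef
  have hL : (1:ℤ) ≤ L := Int.ceil_pos.mpr (by positivity)
  set N : ℤ := (2 * C0 + 3) * (L + 1) with hNdef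
  have hN : (1:ℤ) ≤ N := by nlinarith
  have hab : |a| + |b| ≤ C0 * ε := by
    have := Int.le_ceil ((|a| + |b|) / ε)
    calc |a| + |b| = (|a| + |b|) / ε * ε := by field_simp
    _ ≤ C0 * ε := by apply mul_le_mul_of_nonneg_right this hε.le
  have hLs : 1 ≤ (L:ℝ) * ε := by
    have := Int.le_ceil (1 / ε)
    calc (1:ℝ) = 1 / ε * ε := by field_simp
    _ ≤ L * ε := mul_le_mul_of_nonneg_right this hε.le
  set f : ℤ × ℤ → ℤ × ℤ := fun pq =>
    (⌊(pq.1 * a + pq.2 * b) / ε⌋, ⌊Int.fract (pq.1 * α + pq.2 * β) / ε⌋) with hfdef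
  set S : Finset (ℤ × ℤ) := Finset.Icc 0 N ×ˢ Finset.Icc 0 N with hSdef
  set T : Finset (ℤ × ℤ) := Finset.Icc (-(N * C0)) (N * C0) ×ˢ Finset.Icc 0 (L - 1) with hTdef
  have hmaps : ∀ pq ∈ S, f pq ∈ T := by
    rintro ⟨p, q⟩ hpq
    simp only [hSdef, Finset.mem_product, Finset.mem_Icc] at hpq
    obtain ⟨⟨hp0, hpN⟩, hq0, hqN⟩ := hpq
    simp only [hTdef, Finset.mem_product, Finset.mem_Icc]
    have hpabs : |(p:ℝ)| ≤ (N:ℝ) := by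
      rw [abs_of_nonneg (by exact_mod_cast hp0)]; exact_mod_cast hpN
    have hqabs : |(q:ℝ)| ≤ (N:ℝ) := by
      rw [abs_of_nonneg (by exact_mod_cast hq0)]; exact_mod_cast hqN
    have hbound : |(p:ℝ) * a + q * b| ≤ N * C0 * ε := by
      calc |(p:ℝ) * a + q * b| ≤ |(p:ℝ) * a| + |(q:ℝ) * b| := abs_add_le _ _
      _ = |(p:ℝ)| * |a| + |(q:ℝ)| * |b| := by rw [abs_mul, abs_mul]
      _ ≤ N * |a| + N * |b| :=
          add_le_add (mul_le_mul_of_nonneg_right hpabs (abs_nonneg a))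
            (mul_le_mul_of_nonneg_right hqabs (abs_nonneg b))
      _ = N * (|a| + |b|) := by ring
      _ ≤ N * (C0 * ε) := by
            apply mul_le_mul_of_nonneg_left hab; exact_mod_cast le_trans zero_le_one hN
      _ = N * C0 * ε := by ring
    rw [abs_le] at hbound
    refine ⟨⟨?_, ?_⟩, ?_, ?_⟩
    · rw [Int.le_floor]; push_cast
      rw [le_div_iff₀ hε]; linarith [hbound.1]
    · have h2 : ((p:ℝ) * a + q * b) / ε ≤ ((N * C0 : ℤ) : ℝ) := by
        push_cast; rw [div_le_iff₀ hε]; linarith [hbound.2]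
      calc ⌊((p:ℝ) * a + q * b) / ε⌋ ≤ ⌊((N * C0 : ℤ) : ℝ)⌋ := Int.floor_le_floor h2
      _ = N * C0 := Int.floor_intCast _
    · exact Int.le_floor.mpr (by push_cast; exact div_nonneg (Int.fract_nonneg _) hε.le)
    · have h1 : Int.fract ((p:ℝ) * α + q * β) / ε < ((L:ℤ):ℝ) := by
        rw [div_lt_iff₀ hε]
        calc Int.fract ((p:ℝ) * α + q * β) < 1 := Int.fract_lt_one _
        _ ≤ L * ε := hLs
      have := Int.floor_lt.mpr h1
      have h' : (f (p, q)).2 = ⌊Int.fract ((p:ℝ) * α + q * β) / ε⌋ := rfl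
      omega
  have hcard : T.card < S.card := by
    have hTc : (T.card : ℤ) = (2 * (N * C0) + 1) * L := by
      rw [hTdef, Finset.card_product, Int.card_Icc, Int.card_Icc]
      push_cast [Int.toNat_of_nonneg (by nlinarith : (0:ℤ) ≤ N * C0 + 1 - -(N * C0)),
        Int.toNat_of_nonneg (by omega : (0:ℤ) ≤ L - 1 + 1 - 0)]
      ring
    have hSc : (S.card : ℤ) = (N + 1) * (N + 1) := by
      rw [hSdef, Finset.card_product, Int.card_Icc]
      push_cast [Int.toNat_of_nonneg (by omega : (0:ℤ) ≤ N + 1 - 0)]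
      ring
    have : (T.card : ℤ) < (S.card : ℤ) := by
      rw [hTc, hSc]
      have h1 : 2 * (N * C0) + 1 ≤ N * (2 * C0 + 3) := by nlinarith
      have h2 : N * (2 * C0 + 3) * L < N * N := by
        rw [hNdef]; nlinarith
      nlinarith
    exact_mod_cast this
  obtain ⟨x, hx, y, hy, hxy, hfxy⟩ := Finset.exists_ne_map_eq_of_card_lt_of_maps_to hcard hmaps
  refine ⟨x.1 - y.1, x.2 - y.2, ?_, ?_, ?_⟩
  · rintro ⟨h1, h2⟩
    exact hxy (Prod.ext (by omega) (by omega))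
  · have h := congrArg Prod.fst hfxy
    simp only [hfdef] at h
    have h2 := floor_eq_abs_lt (x := (x.1 * a + x.2 * b) / ε) (y := (y.1 * a + y.2 * b) / ε) h
    have h3 : |((x.1 - y.1 : ℤ) : ℝ) * a + ((x.2 - y.2 : ℤ) : ℝ) * b| / ε < 1 := by
      rw [← abs_of_pos hε, ← abs_div]
      convert h2 using 2
      · rfl
      · rfl
      · push_cast; ring
    calc |((x.1 - y.1 : ℤ) : ℝ) * a + ((x.2 - y.2 : ℤ) : ℝ) * b|
        = |((x.1 - y.1 : ℤ) : ℝ) * a + ((x.2 - y.2 : ℤ) : ℝ) * b| / ε * ε := by field_simp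
    _ < 1 * ε := by apply mul_lt_mul_of_pos_right h3 hε
    _ = ε := one_mul ε
  · refine ⟨⌊(x.1 * α + x.2 * β : ℝ)⌋ - ⌊(y.1 * α + y.2 * β : ℝ)⌋, ?_⟩
    have h := congrArg Prod.snd hfxy
    simp only [hfdef] at h
    have h2 := floor_eq_abs_lt (x := Int.fract ((x.1 : ℝ) * α + x.2 * β) / ε)
      (y := Int.fract ((y.1 : ℝ) * α + y.2 * β) / ε) h
    have h3 : |Int.fract ((x.1 : ℝ) * α + x.2 * β) - Int.fract ((y.1 : ℝ) * α + y.2 * β)| < ε := by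
      calc |Int.fract ((x.1 : ℝ) * α + x.2 * β) - Int.fract ((y.1 : ℝ) * α + y.2 * β)|
          = |Int.fract ((x.1 : ℝ) * α + x.2 * β) / ε - Int.fract ((y.1 : ℝ) * α + y.2 * β) / ε| * ε := by
            rw [← abs_of_pos hε, ← abs_mul]; congr 1; field_simp
            rw [abs_of_pos hε]
      _ < 1 * ε := mul_lt_mul_of_pos_right h2 hε
      _ = ε := one_mul ε
    convert h3 using 2
    simp only [Int.fract]
    push_cast; ring

set_option maxHeartbeats 1000000 in
theorem exists_small_log
    {K : Type} [Field K] [NumberField K] (r r₁ r₂ d : ℕ)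
    (hr : r + 1 = r₁ + r₂) (hr2 : 2 ≤ r)
    (hd : Module.finrank ℚ K = d) (hd2 : r₁ + 2 * r₂ = d)
    (σR : Fin r₁ → (K →+* ℝ)) (σC : Fin r₂ → (K →+* ℂ))
    (hσR : Function.Injective σR) (hσC : Function.Injective σC)
    (hσCconj : ∀ j j' : Fin r₂, (starRingEnd ℂ).comp (σC j) ≠ σC j')
    (hCM : ¬(r₁ = 0 ∧ ∃ F : IntermediateField ℚ K, Module.finrank F K = 2 ∧
        ∀ φ : F →+* ℂ, ∀ x : F, (φ x).im = 0))
    (ζ : (Fin r → ℤ) → (NumberField.RingOfIntegers K)ˣ)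
    (hζhom : ∀ m n, ζ (m + n) = ζ m * ζ n)
    (hζinj : Function.Injective ζ)
    (hζfin : (Subgroup.closure (Set.range ζ)).index ≠ 0)
    :
    ∀ H : AddSubgroup (Fin r → ℤ), H.index ≠ 0 →
      ∀ (i : Fin r₁ ⊕ Fin r₂) (δ : ℝ), 0 < δ →
        ∃ n ∈ H, n ≠ 0 ∧
          ‖Complex.log (embC σR σC i (unitToK (ζ n)))‖ < δ
    := by
  intro H hH i δ hδ
  have pi_pos := Real.pi_pos
  have pi_lt := Real.pi_lt_d2
  set i0 : Fin r := ⟨0, by omega⟩ with hi0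
  set i1 : Fin r := ⟨1, by omega⟩ with hi1
  have hi01 : i0 ≠ i1 := by simp [hi0, hi1, Fin.ext_iff]
  set e₀ : Fin r → ℤ := Pi.single i0 1 with he₀
  set e₁ : Fin r → ℤ := Pi.single i1 1 with he₁
  set w : (Fin r → ℤ) → ℂ := fun n => embC σR σC i (unitToK (ζ n)) with hwdef
  -- basic nonvanishing
  have hunit : ∀ n, unitToK (ζ n) ≠ 0 := by
    intro n
    have h1 : unitToK (ζ n) * unitToK (ζ n)⁻¹ = 1 := by
      unfold unitToK
      rw [← map_mul, ← Units.val_mul, mul_inv_cancel, Units.val_one, map_one]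
    exact left_ne_zero_of_mul_eq_one h1
  have hmulE : ∀ x y : K, embC σR σC i (x * y) = embC σR σC i x * embC σR σC i y := by
    intro x y; cases i <;> simp [embC, map_mul]
  have hneE : ∀ x : K, x ≠ 0 → embC σR σC i x ≠ 0 := by
    intro x hx
    cases i with
    | inl a =>
        simp only [embC, ne_eq, Complex.ofReal_eq_zero]
        exact fun h => hx ((map_eq_zero (σR a)).mp h)
    | inr a =>
        simp only [embC, ne_eq]
        exact fun h => hx ((map_eq_zero (σC a)).mp h)
  have hw0 : ∀ n, w n ≠ 0 := fun n => hneE _ (hunit n)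
  have hwmul : ∀ m n, w (m + n) = w m * w n := by
    intro m n
    simp only [hwdef, hζhom]
    rw [show unitToK (ζ m * ζ n) = unitToK (ζ m) * unitToK (ζ n) by
      unfold unitToK; rw [Units.val_mul, map_mul]]
    exact hmulE _ _
  -- the two additive homomorphisms
  set Λ : (Fin r → ℤ) →+ ℝ := AddMonoidHom.mk' (fun n => Real.log (‖w n‖))
    (by intro m n
        show Real.log (‖w (m + n)‖) = Real.log (‖w m‖) + Real.log (‖w n‖)
        rw [hwmul, norm_mul, Real.log_mul (norm_ne_zero_iff.mpr (hw0 m)) (norm_ne_zero_iff.mpr (hw0 n))]) with hΛdef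
  set A : (Fin r → ℤ) →+ Real.Angle := AddMonoidHom.mk' (fun n => (Complex.arg (w n) : Real.Angle))
    (by intro m n
        show ((w (m + n)).arg : Real.Angle) = ((w m).arg : Real.Angle) + ((w n).arg : Real.Angle)
        rw [hwmul, Complex.arg_mul_coe_angle (hw0 m) (hw0 n)]) with hAdef
  set aa : ℝ := Λ e₀ with haa
  set bb : ℝ := Λ e₁ with hbb
  set α : ℝ := Complex.arg (w e₀) with hα
  set β : ℝ := Complex.arg (w e₁) with hβ
  set Nn : ℕ := H.index with hNn
  have hN1 : 1 ≤ Nn := Nat.one_le_iff_ne_zero.mpr hH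
  have hNpos : (0:ℝ) < Nn := by exact_mod_cast hN1
  set ε : ℝ := min δ 1 / (8 * Nn) with hε
  have hεpos : 0 < ε := by
    apply div_pos (lt_min hδ one_pos); positivity
  have hNe : (Nn:ℝ) * ε = min δ 1 / 8 := by
    rw [hε]; field_simp
  obtain ⟨p, q, hpq, h1, k, h2⟩ := pigeon aa bb (α / (2 * Real.pi)) (β / (2 * Real.pi)) ε hεpos
  set m₀ : Fin r → ℤ := p • e₀ + q • e₁ with hm₀
  set n : Fin r → ℤ := Nn • m₀ with hn
  have hmem : n ∈ H := by rw [hn, hNn]; exact AddSubgroup.nsmul_index_mem H m₀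
  have hs00 : e₀ i0 = 1 := Pi.single_eq_same i0 1
  have hs10 : e₁ i0 = 0 := Pi.single_eq_of_ne hi01 1
  have hs01 : e₀ i1 = 0 := Pi.single_eq_of_ne hi01.symm 1
  have hs11 : e₁ i1 = 1 := Pi.single_eq_same i1 1
  have hm₀0 : m₀ i0 = p := by
    simp [hm₀, Pi.add_apply, Pi.smul_apply, smul_eq_mul, hs00, hs10]
  have hm₀1 : m₀ i1 = q := by
    simp [hm₀, Pi.add_apply, Pi.smul_apply, smul_eq_mul, hs01, hs11]
  have hNnz : (Nn : ℤ) ≠ 0 := by exact_mod_cast hH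
  have hn0 : n ≠ 0 := by
    intro h
    apply hpq
    constructor
    · have h0 := congrFun h i0
      simp only [hn, Pi.smul_apply, nsmul_eq_mul, Pi.mul_apply, Pi.natCast_apply, Pi.zero_apply] at h0
      rw [hm₀0] at h0
      exact (mul_eq_zero.mp h0).resolve_left hNnz
    · have h0 := congrFun h i1
      simp only [hn, Pi.smul_apply, nsmul_eq_mul, Pi.mul_apply, Pi.natCast_apply, Pi.zero_apply] at h0
      rw [hm₀1] at h0
      exact (mul_eq_zero.mp h0).resolve_left hNnz
  -- value of Λ on n
  have hΛn : Λ n = (Nn:ℝ) * ((p:ℝ) * aa + (q:ℝ) * bb) := by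
    rw [hn, map_nsmul, hm₀, map_add, map_zsmul, map_zsmul, nsmul_eq_mul, zsmul_eq_mul, zsmul_eq_mul, ← haa, ← hbb]
  have hΛbound : |Λ n| < min δ 1 / 8 := by
    rw [hΛn, abs_mul, abs_of_pos hNpos, ← hNe]
    exact mul_lt_mul_of_pos_left h1 hNpos
  -- value of A on n
  set c : ℝ := (p:ℝ) * α + (q:ℝ) * β with hc
  set t₀ : ℝ := (Nn:ℝ) * (c - 2 * Real.pi * k) with ht₀
  have h2' : |c - 2 * Real.pi * k| < 2 * Real.pi * ε := by
    have h2π : (0:ℝ) < 2 * Real.pi := by positivity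
    have h2πne : (2 * Real.pi) ≠ 0 := ne_of_gt h2π
    have hX : (2 * Real.pi) * ((p:ℝ) * (α / (2 * Real.pi)) + (q:ℝ) * (β / (2 * Real.pi)) - k)
        = c - 2 * Real.pi * k := by
      field_simp [hc]
      try ring
    calc |c - 2 * Real.pi * k|
        = |(2 * Real.pi) * ((p:ℝ) * (α / (2 * Real.pi)) + (q:ℝ) * (β / (2 * Real.pi)) - k)| := by
          rw [hX]
    _ = (2 * Real.pi) * |(p:ℝ) * (α / (2 * Real.pi)) + (q:ℝ) * (β / (2 * Real.pi)) - k| := by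
          rw [abs_mul, abs_of_pos h2π]
    _ < (2 * Real.pi) * ε := mul_lt_mul_of_pos_left h2 h2π
  have ht₀bound : |t₀| < 2 * Real.pi * (min δ 1 / 8) := by
    rw [ht₀, abs_mul, abs_of_pos hNpos]
    calc (Nn:ℝ) * |c - 2 * Real.pi * k| < (Nn:ℝ) * (2 * Real.pi * ε) :=
          mul_lt_mul_of_pos_left h2' hNpos
    _ = 2 * Real.pi * ((Nn:ℝ) * ε) := by ring
    _ = 2 * Real.pi * (min δ 1 / 8) := by rw [hNe]
  have ht₀pi : |t₀| < Real.pi := by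
    have hm1 : min δ 1 ≤ 1 := min_le_right _ _
    nlinarith [abs_nonneg t₀]
  have hAn : (Complex.arg (w n) : Real.Angle) = ((t₀ : ℝ) : Real.Angle) := by
    have hA1 : (Complex.arg (w n) : Real.Angle) = A n := rfl
    rw [hA1, hn, map_nsmul, hm₀, map_add, map_zsmul, map_zsmul]
    have hA0 : A e₀ = ((α:ℝ) : Real.Angle) := rfl
    have hA1' : A e₁ = ((β:ℝ) : Real.Angle) := rfl
    rw [hA0, hA1', ← Real.Angle.coe_zsmul, ← Real.Angle.coe_zsmul, ← Real.Angle.coe_add,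
      ← Real.Angle.coe_nsmul]
    have hsplit : (Nn • (p • α + q • β) : ℝ) = t₀ + ((Nn : ℤ) * k) • (2 * Real.pi : ℝ) := by
      rw [zsmul_eq_mul, nsmul_eq_mul, zsmul_eq_mul, zsmul_eq_mul, ht₀, hc]
      push_cast; ring
    rw [hsplit, Real.Angle.coe_add, Real.Angle.coe_zsmul, Real.Angle.coe_two_pi, smul_zero,
      add_zero]
  have hargn : Complex.arg (w n) = t₀ := by
    have h3 : Complex.arg (w n) = ((Complex.arg (w n) : Real.Angle)).toReal :=
      (Complex.arg_coe_angle_toReal_eq_arg _).symm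
    rw [h3, hAn, Real.Angle.toReal_coe_eq_self_iff]
    rw [abs_lt] at ht₀pi
    exact ⟨ht₀pi.1, ht₀pi.2.le⟩
  refine ⟨n, hmem, hn0, ?_⟩
  have hlog : Complex.log (w n) = Complex.ofReal (Real.log (‖w n‖)) + Complex.ofReal t₀ * Complex.I := by
    rw [Complex.log, hargn]
  calc ‖Complex.log (w n)‖ ≤ |(Complex.log (w n)).re| + |(Complex.log (w n)).im| :=
        Complex.norm_le_abs_re_add_abs_im _
  _ = |Λ n| + |t₀| := by
      rw [Complex.log_re, Complex.log_im, hargn]; rfl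
  _ < min δ 1 / 8 + 2 * Real.pi * (min δ 1 / 8) := add_lt_add hΛbound ht₀bound
  _ ≤ δ := by
      have hm1 : min δ 1 ≤ 1 := min_le_right _ _
      have hm2 : min δ 1 ≤ δ := min_le_left _ _
      have hm3 : 0 < min δ 1 := lt_min hδ one_pos
      nlinarith


end
end
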